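/- arXiv:2102.01124 — 5 statements merged into one kernel-verified Lean document; each statement's English description precedes it below -/
import Mathlib

section
/- Every graph G on at least 3 vertices that is disconnected, bipartite, and has edges in at most one connected component admits a valid 3-role coloring. In particular, every disconnected bipartite chain graph on at least 3 vertices admits a 3-role coloring. -/
def IsRoleColoring {V C : Type*} (G : SimpleGraph V) (α : V → C) : Prop :=
  Function.Surjective α ∧
    ∀ u v : V, α u = α v → α '' (G.neighborSet u) = α '' (G.neighborSet v)

/-- Every graph on at least 3 vertices that is disconnected, bipartite, and has
edges in at most one connected component admits a valid 3-role coloring. -/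
theorem disconnected_bipartite_three_role {V : Type*} [Fintype V] (G : SimpleGraph V)
    (hcard : 3 ≤ Fintype.card V) (hdisc : ¬ G.Connected) (hbip : G.Colorable 2)
    (hone : ∀ u v u' v' : V, G.Adj u v → G.Adj u' v' → G.Reachable u u') :
    ∃ α : V → Fin 3, IsRoleColoring G α := by
  classical
  by_cases hE : ∃ u v : V, G.Adj u v
  · obtain ⟨u0, v0, huv⟩ := hE
    obtain ⟨C⟩ := hbip
    set α : V → Fin 3 := fun v =>
      if G.Reachable u0 v then (if C v = C u0 then 0 else 1) else 2 with hα
    -- unreachable vertices are isolated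
    have hnotreach : ∀ v, ¬ G.Reachable u0 v → G.neighborSet v = ∅ := by
      intro v hv
      ext w
      simp only [SimpleGraph.mem_neighborSet, Set.mem_empty_iff_false, iff_false]
      intro hadj
      exact hv (hone u0 v0 v w huv hadj)
    -- reachable vertices have a neighbor
    have hnb : ∀ v, G.Reachable u0 v → ∃ w, G.Adj v w := by
      intro v hv
      obtain ⟨p⟩ := hv.symm
      cases p with
      | nil => exact ⟨v0, huv⟩
      | cons h _ => exact ⟨_, h⟩
    have fin2 : ∀ a b d : Fin 2, a ≠ b → ((b = d) ↔ ¬ a = d) := by decide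
    -- value of α on neighbors of a reachable vertex
    have hval : ∀ v w, G.Reachable u0 v → G.Adj v w →
        α w = if C v = C u0 then 1 else 0 := by
      intro v w hv hadj
      have hw : G.Reachable u0 w := hv.trans hadj.reachable
      have hne : C v ≠ C w := C.valid hadj
      have h2 := fin2 (C v) (C w) (C u0) hne
      simp only [hα, if_pos hw]
      by_cases h : C v = C u0
      · rw [if_neg (fun hw' => (h2.mp hw') h), if_pos h]
      · rw [if_pos (h2.mpr h), if_neg h]
    have himg : ∀ v, G.Reachable u0 v →
        α '' G.neighborSet v = {if C v = C u0 then (1 : Fin 3) else 0} := by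
      intro v hv
      ext x
      simp only [Set.mem_image, SimpleGraph.mem_neighborSet, Set.mem_singleton_iff]
      constructor
      · rintro ⟨w, hadj, rfl⟩
        exact hval v w hv hadj
      · intro hx
        obtain ⟨w, hadj⟩ := hnb v hv
        exact ⟨w, hadj, (hval v w hv hadj).trans hx.symm⟩
    refine ⟨α, ?_, ?_⟩
    · -- surjectivity
      have hne : Nonempty V := Fintype.card_pos_iff.mp (by omega)
      have : ∃ x y : V, ¬ G.Reachable x y := by
        by_contra h
        push_neg at h
        exact hdisc (G.connected_iff.mpr ⟨h, hne⟩)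
      obtain ⟨x, y, hxy⟩ := this
      have hbad : ∃ z, ¬ G.Reachable u0 z := by
        by_contra h
        push_neg at h
        exact hxy ((h x).symm.trans (h y))
      obtain ⟨z, hz⟩ := hbad
      intro c
      fin_cases c
      · exact ⟨u0, by simp [hα, SimpleGraph.Reachable.refl]⟩
      · refine ⟨v0, ?_⟩
        have h1 : G.Reachable u0 v0 := huv.reachable
        have h2 : C v0 ≠ C u0 := (C.valid huv).symm
        simp [hα, h1, h2]
      · exact ⟨z, by simp [hα, hz]⟩
    · intro u v h
      by_cases hu : G.Reachable u0 u <;> by_cases hv : G.Reachable u0 v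
      · rw [himg u hu, himg v hv]
        have h' : (if C u = C u0 then (0 : Fin 3) else 1) =
            (if C v = C u0 then 0 else 1) := by
          simpa [hα, hu, hv] using h
        split_ifs at h' ⊢ <;> simp_all
      · exfalso
        have : α u = 2 := by simpa [hα, hu, hv] using h
        simp only [hα, if_pos hu] at this
        split_ifs at this <;> simp_all
      · exfalso
        have : α v = 2 := by simpa [hα, hu, hv] using h.symm
        simp only [hα, if_pos hv] at this
        split_ifs at this <;> simp_all
      · rw [hnotreach u hu, hnotreach v hv]
  · -- no edges: neighbor sets are empty, any surjection works
    push_neg at hE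
    have hns : ∀ v, G.neighborSet v = ∅ := by
      intro v; ext w
      simp [SimpleGraph.mem_neighborSet, hE]
    have hle : Fintype.card (Fin 3) ≤ Fintype.card V := by simpa
    obtain ⟨e⟩ := Function.Embedding.nonempty_of_card_le hle
    set α : V → Fin 3 := fun v => if h : ∃ i, e i = v then h.choose else 0 with hα
    refine ⟨α, ?_, ?_⟩
    · intro i
      refine ⟨e i, ?_⟩
      have h : ∃ j, e j = e i := ⟨i, rfl⟩
      simp only [hα, dif_pos h]
      exact e.injective h.choose_spec
    · intro u v _
      rw [hns u, hns v]
end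

section
/- Let G' be obtained from a connected bipartite graph G = (Q, S, E) by attaching to each vertex q ∈ Q a pendant path of two vertices b_q, a_q (edges (q, b_q) and (b_q, a_q)). In any valid 3-role coloring α of G', for every q ∈ Q, the three vertices a_q, b_q, q receive three pairwise distinct colors. -/
lemma walk_closed {V : Type*} {G' : SimpleGraph V} {α : V → Fin 3}
    {S : Set (Fin 3)} (hS : ∀ v, α v ∈ S → ∀ w, G'.Adj v w → α w ∈ S) :
    ∀ {u v : V}, G'.Walk u v → α u ∈ S → α v ∈ S := by
  intro u v p
  induction p with
  | nil => exact id
  | cons h _ ih => exact fun hu => ih (hS _ hu _ h)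

/-- Let `G'` be a connected graph containing a pendant path `a — b — q`
(`a` has degree 1 with unique neighbor `b`, and `b` has exactly the two
neighbors `a` and `q`). In any valid 3-role coloring `α` of `G'`, the three
vertices `a`, `b`, `q` receive pairwise distinct colors. -/
theorem pendant_path_distinct_colors {V : Type*} (G' : SimpleGraph V)
    (hconn : G'.Connected) (q b a : V)
    (ha : G'.neighborSet a = {b}) (hb : G'.neighborSet b = {a, q})
    (α : V → Fin 3) (h : IsRoleColoring G' α) :
    α a ≠ α b ∧ α b ≠ α q ∧ α a ≠ α q := by
  obtain ⟨hsurj, hrole⟩ := h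
  have hNa : α '' G'.neighborSet a = {α b} := by rw [ha]; simp
  have hNb : α '' G'.neighborSet b = {α a, α q} := by
    rw [hb, Set.image_insert_eq, Set.image_singleton]
  have key : ∀ (S : Set (Fin 3)), α a ∈ S →
      (∀ v, α v ∈ S → ∀ w, G'.Adj v w → α w ∈ S) → ∀ v, α v ∈ S := by
    intro S haS hS v
    obtain ⟨p⟩ := hconn a v
    exact walk_closed hS p haS
  -- first: α a ≠ α b
  have hab : α a ≠ α b := by
    intro hab
    have h1 : α '' G'.neighborSet b = {α b} := by rw [← hrole a b hab, hNa]
    have hall : ∀ v, α v ∈ ({α b} : Set (Fin 3)) := by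
      refine key _ (by simpa using hab) ?_
      intro v hv w hw
      have hv' : α v = α b := hv
      have : α w ∈ α '' G'.neighborSet v :=
        Set.mem_image_of_mem α ((G'.mem_neighborSet v w).mpr hw)
      rwa [hrole v b hv', h1] at this
    obtain ⟨x, hx⟩ := hsurj 0
    obtain ⟨y, hy⟩ := hsurj 1
    have hx' : α x = α b := hall x
    have hy' : α y = α b := hall y
    rw [hx] at hx'; rw [hy] at hy'
    omega
  have twocol : ¬ (∀ v, α v ∈ ({α a, α b} : Set (Fin 3))) := by
    intro hall
    obtain ⟨x, hx⟩ := hsurj 0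
    obtain ⟨y, hy⟩ := hsurj 1
    obtain ⟨z, hz⟩ := hsurj 2
    have hx' := hall x; have hy' := hall y; have hz' := hall z
    rw [hx] at hx'; rw [hy] at hy'; rw [hz] at hz'
    simp only [Set.mem_insert_iff, Set.mem_singleton_iff] at hx' hy' hz'
    rcases hx' with h0 | h0 <;> rcases hy' with h1 | h1 <;>
      rcases hz' with h2 | h2 <;> omega
  -- second: α b ≠ α q
  have hbq : α b ≠ α q := by
    intro hbq
    apply twocol
    refine key _ (by simp) ?_
    intro v hv w hw
    have hmem : α w ∈ α '' G'.neighborSet v :=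
      Set.mem_image_of_mem α ((G'.mem_neighborSet v w).mpr hw)
    rcases hv with hv' | hv'
    · rw [hrole v a hv', hNa] at hmem
      exact Set.mem_insert_of_mem _ hmem
    · rw [hrole v b hv', hNb, ← hbq] at hmem
      exact hmem
  -- third: α a ≠ α q
  refine ⟨hab, hbq, ?_⟩
  intro haq
  apply twocol
  refine key _ (by simp) ?_
  intro v hv w hw
  have hmem : α w ∈ α '' G'.neighborSet v :=
    Set.mem_image_of_mem α ((G'.mem_neighborSet v w).mpr hw)
  rcases hv with hv' | hv'
  · rw [hrole v a hv', hNa] at hmem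
    exact Set.mem_insert_of_mem _ hmem
  · rw [hrole v b hv', hNb, ← haq] at hmem
    simp only [Set.mem_insert_iff, Set.mem_singleton_iff, or_self] at hmem
    exact Set.mem_insert_iff.mpr (Or.inl hmem)
end

section
/- Let G' be a connected graph obtained from a bipartite graph G = (Q, S, E) (with every s ∈ S having at least one neighbor in Q) by attaching a pendant vertex p^s to each s ∈ S. In any valid 4-role coloring α of G', no vertex of S receives the same color as any vertex of Q, i.e., α(S) ∩ α(Q) = ∅. -/
lemma reach_closed {V : Type*} (G : SimpleGraph V) (Pr : V → Prop)
    (h : ∀ v w, G.Adj v w → Pr v → Pr w) {u v : V} (hr : G.Reachable u v)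
    (hu : Pr u) : Pr v := by
  obtain ⟨w⟩ := hr
  induction w with
  | nil => exact hu
  | cons hadj _ ih => exact ih (h _ _ hadj hu)

/-- Let `G'` be a connected graph obtained from the incidence graph of a 3-uniform
hypergraph (parts `Q` and `S`, every `s ∈ S` having exactly 3 neighbors in `Q`)
by attaching a pendant vertex to each `s ∈ S`. In any valid 4-role coloring `α`
of `G'`, no vertex of `S` receives the same color as any vertex of `Q`. -/
theorem four_role_S_Q_disjoint {V : Type*} [Fintype V] (G' : SimpleGraph V)
    (hconn : G'.Connected) (Q S P : Set V)
    (hpart : ∀ v : V, (v ∈ Q ∧ v ∉ S ∧ v ∉ P) ∨ (v ∉ Q ∧ v ∈ S ∧ v ∉ P) ∨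
      (v ∉ Q ∧ v ∉ S ∧ v ∈ P))
    (hQ : ∀ q ∈ Q, G'.neighborSet q ⊆ S)
    (hS3 : ∀ s ∈ S, (G'.neighborSet s ∩ Q).ncard = 3)
    (hSpend : ∀ s ∈ S, ∃ p ∈ P, G'.neighborSet p = {s})
    (hP : ∀ p ∈ P, ∃ s ∈ S, G'.neighborSet p = {s})
    (α : V → Fin 4) (h : IsRoleColoring G' α) :
    ∀ q ∈ Q, ∀ s ∈ S, α q ≠ α s := by
  intro q hq s hs hqs
  obtain ⟨hsurj, hrole⟩ := h
  obtain ⟨p, hpP, hpN⟩ := hSpend s hs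
  have hps : p ∈ G'.neighborSet s := by
    have hsp : s ∈ G'.neighborSet p := by rw [hpN]; rfl
    exact (G'.mem_neighborSet s p).2 ((G'.mem_neighborSet p s).1 hsp).symm
  -- the image of `p`'s neighborhood is the singleton `{α s}`
  have key : α '' (G'.neighborSet p) = {α s} := by
    rw [hpN, Set.image_singleton]
  -- α p appears among the colors of neighbors of q, which are all in S
  have h1 : α '' (G'.neighborSet q) = α '' (G'.neighborSet s) := hrole q s hqs
  have h2 : α p ∈ α '' (G'.neighborSet q) := by
    rw [h1]; exact ⟨p, hps, rfl⟩
  obtain ⟨s', hs'N, hs'c⟩ := h2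
  have hs'S : s' ∈ S := hQ q hq hs'N
  obtain ⟨p', hp'P, hp'N⟩ := hSpend s' hs'S
  have hp's' : p' ∈ G'.neighborSet s' := by
    have hsp : s' ∈ G'.neighborSet p' := by rw [hp'N]; rfl
    exact (G'.mem_neighborSet s' p').2 ((G'.mem_neighborSet p' s').1 hsp).symm
  -- every neighbor of an `α p`-colored vertex has color `α s`
  have h3 : α '' (G'.neighborSet s') = {α s} := by
    rw [← hrole p s' hs'c.symm, key]
  have hp'c : α p' = α s := by
    have : α p' ∈ α '' (G'.neighborSet s') := ⟨p', hp's', rfl⟩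
    rw [h3] at this
    exact this
  set d := α p with hd
  set e := α s with he
  have closed : ∀ v w, G'.Adj v w → (α v = d ∨ α v = e) → (α w = d ∨ α w = e) := by
    intro v w hvw hv
    rcases hv with hv | hv
    · right
      have him : α '' (G'.neighborSet v) = {e} := by rw [hrole v p hv, key]
      have : α w ∈ α '' (G'.neighborSet v) := ⟨w, hvw, rfl⟩
      rw [him] at this
      exact this
    · left
      have him : α '' (G'.neighborSet v) = {d} := by
        rw [hrole v p' (hv.trans hp'c.symm), hp'N, Set.image_singleton, hs'c]
      have : α w ∈ α '' (G'.neighborSet v) := ⟨w, hvw, rfl⟩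
      rw [him] at this
      exact this
  have hall : ∀ v, α v = d ∨ α v = e := by
    intro v
    exact reach_closed G' (fun v => α v = d ∨ α v = e) closed
      (hconn.preconnected p v) (Or.inl rfl)
  obtain ⟨c, hc1, hc2⟩ : ∃ c : Fin 4, c ≠ d ∧ c ≠ e := by
    have : ∀ a b : Fin 4, ∃ c : Fin 4, c ≠ a ∧ c ≠ b := by decide
    exact this d e
  obtain ⟨v, hv⟩ := hsurj c
  rcases hall v with h' | h' <;> rw [hv] at h'
  · exact hc1 h'
  · exact hc2 h'
end

section
/- Let G'' be a connected graph obtained from a bipartite graph by attaching to each vertex s in one part a pendant path p^s_1 — p^s_2 — ... — p^s_{k-3} — s of k-3 new vertices. In any valid k-role coloring α of G'', for each such path the vertices p^s_1, ..., p^s_{k-3} receive pairwise distinct colors. -/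
/-- Let `k ≥ 5` and let `G''` be a connected graph containing an induced pendant
path `p 0 — p 1 — ⋯ — p (k-4) — s` on `k - 3` new vertices attached to `s`.
In any valid `k`-role coloring `α` of `G''`, the vertices `p 0, …, p (k-4)`
receive pairwise distinct colors. -/
theorem pendant_path_injective_colors {V : Type*} (k : ℕ) (hk : 5 ≤ k)
    (G'' : SimpleGraph V) (hconn : G''.Connected) (s : V) (p : ℕ → V)
    (h0 : G''.neighborSet (p 0) = {p 1})
    (hmid : ∀ i : ℕ, 0 < i → i < k - 4 →
      G''.neighborSet (p i) = {p (i - 1), p (i + 1)})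
    (hlast : G''.neighborSet (p (k - 4)) = {p (k - 5), s})
    (α : V → Fin k) (h : IsRoleColoring G'' α) :
    ∀ i j : ℕ, i < k - 3 → j < k - 3 → α (p i) = α (p j) → i = j := by
  obtain ⟨hsurj, hrole⟩ := h
  have key : ∀ i j : ℕ, i < j → j ≤ k - 4 → α (p i) = α (p j) → False := by
    intro i j hij hjk hc
    set S : Set (Fin k) := {c | ∃ m, m < j ∧ c = α (p m)} with hS
    have hstep : ∀ u v : V, G''.Adj u v → α u ∈ S → α v ∈ S := by
      intro u v huv hu
      obtain ⟨m, hm, hum⟩ := hu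
      have hnb : α '' (G''.neighborSet u) = α '' (G''.neighborSet (p m)) :=
        hrole u (p m) hum
      have hv : α v ∈ α '' (G''.neighborSet (p m)) := by
        rw [← hnb]; exact ⟨v, huv, rfl⟩
      rcases Nat.eq_zero_or_pos m with h0m | h0m
      · subst h0m
        rw [h0] at hv
        obtain ⟨x, hx, hxv⟩ := hv
        simp only [Set.mem_singleton_iff] at hx
        rcases Nat.lt_or_ge 1 j with h1 | h1
        · exact ⟨1, h1, by rw [← hxv, hx]⟩
        · have hj1 : j = 1 := by omega
          have hi0 : i = 0 := by omega
          refine ⟨0, by omega, ?_⟩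
          rw [← hxv, hx]
          simp only [hi0, hj1] at hc
          exact hc.symm
      · have hmlt : m < k - 4 := by omega
        rw [hmid m h0m hmlt] at hv
        obtain ⟨x, hx, hxv⟩ := hv
        simp only [Set.mem_insert_iff, Set.mem_singleton_iff] at hx
        rcases hx with hx | hx
        · exact ⟨m - 1, by omega, by rw [← hxv, hx]⟩
        · rcases Nat.lt_or_ge (m + 1) j with h1 | h1
          · exact ⟨m + 1, h1, by rw [← hxv, hx]⟩
          · have hmj : m + 1 = j := by omega
            exact ⟨i, hij, by rw [← hxv, hx, hmj, ← hc]⟩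
    have hwalk : ∀ u w : V, G''.Walk u w → α u ∈ S → α w ∈ S := by
      intro u w q
      induction q with
      | nil => exact id
      | cons huv t ih => intro hu; exact ih (hstep _ _ huv hu)
    have hall : ∀ w : V, α w ∈ S := by
      intro w
      obtain ⟨q⟩ := hconn.preconnected (p 0) w
      exact hwalk _ _ q ⟨0, by omega, rfl⟩
    have hsurj' : Function.Surjective (fun m : Fin j => α (p m)) := by
      intro c
      obtain ⟨w, hw⟩ := hsurj c
      obtain ⟨m, hm, hmc⟩ := hall w
      exact ⟨⟨m, hm⟩, by rw [← hw, hmc]⟩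
    have hcard := Fintype.card_le_of_surjective _ hsurj'
    simp only [Fintype.card_fin] at hcard
    omega
  intro i j hi hj hc
  by_contra hne
  rcases Nat.lt_or_gt_of_ne hne with hlt | hlt
  · exact key i j hlt (by omega) hc
  · exact key j i hlt (by omega) hc.symm
end

section
/- If a 3-uniform hypergraph H = (Q_H, S_H) with connected incidence graph admits a proper 2-coloring (no hyperedge monochromatic), then the graph G' obtained from the incidence graph G = (Q, S, E) by attaching to each q ∈ Q a pendant path q — b_q — a_q admits a valid 3-role coloring. -/
/-- Vertex set of the graph `G'`: hypergraph vertices `Q`, hyperedges `S_H`,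
and for each `q ∈ Q` the two pendant-path vertices `b_q` and `a_q`. -/
def W16 (Q : Type*) (SH : Finset (Finset Q)) : Type _ :=
  (Q ⊕ {e // e ∈ SH}) ⊕ (Q ⊕ Q)

/-- Base adjacency for `G'`: `q — s` when `q ∈ s`, the pendant-path edges
`q — b_q` and `b_q — a_q`. -/
def rel16 {Q : Type*} (SH : Finset (Finset Q)) : W16 Q SH → W16 Q SH → Prop
  | .inl (.inl q), .inl (.inr s) => q ∈ s.val
  | .inl (.inl q), .inr (.inl q') => q = q'
  | .inr (.inl q), .inr (.inr q') => q = q'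
  | _, _ => False

/-- The graph `G'` obtained from the incidence graph of the hypergraph
`(Q, SH)` by attaching to each `q ∈ Q` a pendant path `q — b_q — a_q`. -/
def G16 {Q : Type*} (SH : Finset (Finset Q)) : SimpleGraph (W16 Q SH) :=
  SimpleGraph.fromRel (rel16 SH)

private def f16' : Fin 2 → Fin 3 := fun b => ⟨b.val, b.isLt.trans (by norm_num)⟩

private lemma f16'_ne_two : ∀ b : Fin 2, f16' b ≠ 2 := by decide
private lemma f16'_01 : ∀ b : Fin 2, f16' b = 0 ∨ f16' b = 1 := by decide
private lemma fin2_resolve : ∀ a b c : Fin 2, a ≠ b → a ≠ c → b = c := by decide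
private lemma fin2_succ : ∀ a b : Fin 2, a ≠ b → a + 1 = b := by decide
private lemma f16'_pair : ∀ b : Fin 2, ∀ c : Fin 3, (c = 0 ∨ c = 1) →
    f16' b = c ∨ f16' (b + 1) = c := by decide

/-- If a 3-uniform hypergraph with connected incidence graph admits a proper
2-coloring (no hyperedge monochromatic), then the graph `G'` obtained from the
incidence graph by attaching a pendant path `q — b_q — a_q` to each vertex `q`
admits a valid 3-role coloring. -/
theorem hypergraph_two_coloring_three_role {Q : Type*} [Fintype Q] [DecidableEq Q]
    (SH : Finset (Finset Q)) (huniform : ∀ e ∈ SH, e.card = 3)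
    (hconn : (G16 SH).Connected)
    (hcol : ∃ β : Q → Fin 2, ∀ e ∈ SH, ∃ q₁ ∈ e, ∃ q₂ ∈ e, β q₁ ≠ β q₂) :
    ∃ α : W16 Q SH → Fin 3, IsRoleColoring (G16 SH) α := by
  classical
  obtain ⟨β, hβ⟩ := hcol
  have hQ : Nonempty Q := by
    obtain ⟨v⟩ := hconn.nonempty
    rcases v with ((q|s)|(q|q))
    · exact ⟨q⟩
    · obtain ⟨e, he⟩ := s
      have h3 := huniform e he
      have hne : e.Nonempty := by rw [← Finset.card_pos, h3]; norm_num
      exact ⟨hne.choose⟩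
    · exact ⟨q⟩
    · exact ⟨q⟩
  obtain ⟨q0⟩ := hQ
  let α : W16 Q SH → Fin 3 := fun v =>
    match v with
    | .inl (.inl q) => f16' (β q)
    | .inl (.inr _) => 2
    | .inr (.inl _) => 2
    | .inr (.inr q) => f16' (β q + 1)
  have hadj : ∀ u v, (G16 SH).Adj u v ↔ u ≠ v ∧ (rel16 SH u v ∨ rel16 SH v u) :=
    fun u v => SimpleGraph.fromRel_adj _ u v
  have himg : ∀ v, α '' ((G16 SH).neighborSet v) =
      (if α v = 2 then ({0, 1} : Set (Fin 3)) else {2}) := by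
    rintro ((q|s)|(q|q))
    · rw [if_neg (f16'_ne_two (β q))]
      ext c
      simp only [Set.mem_image, SimpleGraph.mem_neighborSet, Set.mem_singleton_iff]
      constructor
      · rintro ⟨w, hw, rfl⟩
        replace hw := (hadj _ _).1 hw
        rcases w with ((q'|s')|(q'|q')) <;> simp only [rel16] at hw <;>
          first
          | rfl
          | (exact absurd hw.2 (by simp))
      · rintro rfl
        exact ⟨.inr (.inl q), by refine (hadj _ _).2 ?_; exact ⟨(fun h => by cases h), Or.inl rfl⟩, rfl⟩
    · rw [if_pos rfl]
      ext c
      simp only [Set.mem_image, SimpleGraph.mem_neighborSet, Set.mem_insert_iff,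
        Set.mem_singleton_iff]
      constructor
      · rintro ⟨w, hw, rfl⟩
        replace hw := (hadj _ _).1 hw
        rcases w with ((q'|s')|(q'|q')) <;> simp only [rel16] at hw
        · exact f16'_01 (β q')
        · exact absurd hw.2 (by simp)
        · exact absurd hw.2 (by simp)
        · exact absurd hw.2 (by simp)
      · obtain ⟨q₁, hq₁, q₂, hq₂, hne⟩ := hβ s.val s.property
        have key : ∀ b : Fin 2, ∃ q ∈ s.val, β q = b := by
          intro b
          rcases eq_or_ne (β q₁) b with h | h
          · exact ⟨q₁, hq₁, h⟩
          · exact ⟨q₂, hq₂, fin2_resolve (β q₁) (β q₂) b hne h⟩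
        rintro (rfl | rfl)
        · obtain ⟨q', hq', hb⟩ := key 0
          refine ⟨.inl (.inl q'), ?_, by show f16' (β q') = 0; rw [hb]; rfl⟩
          refine (hadj _ _).2 ?_
          exact ⟨(fun h => by cases h), Or.inr hq'⟩
        · obtain ⟨q', hq', hb⟩ := key 1
          refine ⟨.inl (.inl q'), ?_, by show f16' (β q') = 1; rw [hb]; rfl⟩
          refine (hadj _ _).2 ?_
          exact ⟨(fun h => by cases h), Or.inr hq'⟩
    · rw [if_pos rfl]
      ext c
      simp only [Set.mem_image, SimpleGraph.mem_neighborSet, Set.mem_insert_iff,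
        Set.mem_singleton_iff]
      constructor
      · rintro ⟨w, hw, rfl⟩
        replace hw := (hadj _ _).1 hw
        rcases w with ((q'|s')|(q'|q')) <;> simp only [rel16] at hw
        · rcases hw.2 with h | h
          · exact absurd h (by simp)
          · exact f16'_01 (β q')
        · exact absurd hw.2 (by simp)
        · exact absurd hw.2 (by simp)
        · rcases hw.2 with h | h
          · subst h; exact f16'_01 (β q + 1)
          · exact absurd h (by simp)
      · intro hc
        rcases f16'_pair (β q) c hc with h | h
        · refine ⟨.inl (.inl q), ?_, h⟩
          refine (hadj _ _).2 ?_; exact ⟨(fun h => by cases h), Or.inr rfl⟩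
        · refine ⟨.inr (.inr q), ?_, h⟩
          refine (hadj _ _).2 ?_
          exact ⟨(fun h' => by cases h'), Or.inl rfl⟩
    · rw [if_neg (f16'_ne_two (β q + 1))]
      ext c
      simp only [Set.mem_image, SimpleGraph.mem_neighborSet, Set.mem_singleton_iff]
      constructor
      · rintro ⟨w, hw, rfl⟩
        replace hw := (hadj _ _).1 hw
        rcases w with ((q'|s')|(q'|q')) <;> simp only [rel16] at hw
        · exact absurd hw.2 (by simp)
        · exact absurd hw.2 (by simp)
        · rfl
        · exact absurd hw.2 (by simp)
      · rintro rfl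
        refine ⟨.inr (.inl q), ?_, rfl⟩
        refine (hadj _ _).2 ?_
        exact ⟨(fun h' => by cases h'), Or.inr rfl⟩
  refine ⟨α, ?_, fun u v h => by rw [himg u, himg v, h]⟩
  intro c
  rcases eq_or_ne c 2 with rfl | hc
  · exact ⟨.inr (.inl q0), rfl⟩
  · have hc2 : c.val < 2 := by
      have h3 := c.isLt
      have : c.val ≠ 2 := fun h => hc (Fin.ext h)
      omega
    set c' : Fin 2 := ⟨c.val, hc2⟩ with hc'
    have hfc : f16' c' = c := Fin.ext rfl
    rcases eq_or_ne (β q0) c' with h | h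
    · exact ⟨.inl (.inl q0), by show f16' (β q0) = c; rw [h, hfc]⟩
    · have h2 := fin2_succ (β q0) c' h
      exact ⟨.inr (.inr q0), by show f16' (β q0 + 1) = c; rw [h2, hfc]⟩
end
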